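/- Let G : (0,∞) → ℝ be continuous and strictly decreasing with a (unique) zero R_s > 0, and bounded below by −ν/3 and above by g(σ̄)/3 with g(σ̄) > 0. Then for any R₀ > 0, the solution of R'(t) = R(t)G(R(t)), R(0) = R₀, exists globally, satisfies R₀ e^{−νt/3} ≤ R(t) ≤ R₀ e^{g(σ̄)t/3}, and converges monotonically to R_s as t → ∞. -/

import Mathlib

open Set Filter Topology Real

open MeasureTheory intervalIntegral

lemma stmt12_key (F : ℝ → ℝ) (A' A B : ℝ) (h0 : 0 < A') (h1 : A' < A) (h2 : A < B)
    (hFc : ContinuousOn F (Set.Icc A' B))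
    (hFpos : ∀ R ∈ Set.Ico A' B, 0 < F R) (hFB : F B = 0) :
    ∃ ρ : ℝ → ℝ, ρ 0 = A ∧ (∀ t ∈ Set.Ici (0:ℝ), ρ t ∈ Set.Icc A B) ∧
      (∀ t ∈ Set.Ici (0:ℝ), HasDerivAt ρ (F (ρ t)) t) ∧
      MonotoneOn ρ (Set.Ici 0) ∧ Filter.Tendsto ρ Filter.atTop (nhds B) := by
  classical
  have hIcoOC : Set.OrdConnected (Set.Ico A' B) := Set.ordConnected_Ico
  have hfc : ContinuousOn (fun s => (F s)⁻¹) (Set.Ico A' B) :=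
    ContinuousOn.inv₀ (hFc.mono Set.Ico_subset_Icc_self) (fun s hs => (hFpos s hs).ne')
  have hInt : ∀ x ∈ Set.Ico A' B, ∀ y ∈ Set.Ico A' B,
      IntervalIntegrable (fun s => (F s)⁻¹) volume x y := fun x hx y hy =>
    (hfc.mono (hIcoOC.uIcc_subset hx hy)).intervalIntegrable
  set T : ℝ → ℝ := fun R => ∫ s in A..R, (F s)⁻¹ with hTdef
  have memA : A ∈ Set.Ioo A' B := ⟨h1, h2⟩
  have hTd : ∀ R ∈ Set.Ioo A' B, HasDerivAt T (F R)⁻¹ R := by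
    intro R hR
    exact intervalIntegral.integral_hasDerivAt_right
      (hInt A (Set.Ioo_subset_Ico_self memA) R (Set.Ioo_subset_Ico_self hR))
      (ContinuousOn.stronglyMeasurableAtFilter isOpen_Ioo (hfc.mono Set.Ioo_subset_Ico_self) R hR)
      ((hfc.mono Set.Ioo_subset_Ico_self).continuousAt (isOpen_Ioo.mem_nhds hR))
  have hT0 : T A = 0 := intervalIntegral.integral_same
  have hTmono : StrictMonoOn T (Set.Ico A' B) := by
    intro x hx y hy hxy
    have hsub : T y - T x = ∫ s in x..y, (F s)⁻¹ :=
      intervalIntegral.integral_interval_sub_left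
        (hInt A (Set.Ioo_subset_Ico_self memA) y hy)
        (hInt A (Set.Ioo_subset_Ico_self memA) x hx)
    have hpos : 0 < ∫ s in x..y, (F s)⁻¹ := by
      refine intervalIntegral_pos_of_pos_on (hInt x hx y hy) (fun s hs => ?_) hxy
      exact inv_pos.2 (hFpos s ⟨hx.1.trans hs.1.le, hs.2.trans hy.2⟩)
    linarith
  have hTinj : Set.InjOn T (Set.Ico A' B) := hTmono.injOn
  set P : ℝ → Prop := fun t => ∃ R, R ∈ Set.Ioo A' B ∧ T R = t with hPdef
  set ρ : ℝ → ℝ := fun t => if h : P t then Classical.choose h else B with hρdef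
  have hρP : ∀ {t : ℝ}, (h : P t) → ρ t ∈ Set.Ioo A' B ∧ T (ρ t) = t := by
    intro t h
    have : ρ t = Classical.choose h := dif_pos h
    rw [this]
    exact ⟨(Classical.choose_spec h).1, (Classical.choose_spec h).2⟩
  have hρB : ∀ {t : ℝ}, ¬ P t → ρ t = B := fun h => dif_neg h
  have hρeq : ∀ R ∈ Set.Ioo A' B, ρ (T R) = R := by
    intro R hR
    have h : P (T R) := ⟨R, hR, rfl⟩
    exact hTinj (Set.Ioo_subset_Ico_self (hρP h).1) (Set.Ioo_subset_Ico_self hR) (hρP h).2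
  have hρ0 : ρ 0 = A := by have := hρeq A memA; rwa [hT0] at this
  have hIVT : ∀ x ∈ Set.Ioo A' B, ∀ y ∈ Set.Ioo A' B, x ≤ y →
      ∀ t ∈ Set.Icc (T x) (T y), P t := by
    intro x hx y hy hxy t ht
    have hTc : ContinuousOn T (Set.Icc x y) := fun s hs =>
      (hTd s ⟨lt_of_lt_of_le hx.1 hs.1, lt_of_le_of_lt hs.2 hy.2⟩).continuousAt.continuousWithinAt
    obtain ⟨R, hR, hTR⟩ := intermediate_value_Icc hxy hTc ht
    exact ⟨R, ⟨lt_of_lt_of_le hx.1 hR.1, lt_of_le_of_lt hR.2 hy.2⟩, hTR⟩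
  set A₀ : ℝ := (A' + A) / 2 with hA₀def
  have hA₀ : A₀ ∈ Set.Ioo A' B := ⟨by simp only [hA₀def]; linarith, by simp only [hA₀def]; linarith⟩
  have hTA₀ : T A₀ < 0 := by
    have := hTmono (Set.Ioo_subset_Ico_self hA₀) (Set.Ioo_subset_Ico_self memA)
      (by simp only [hA₀def]; linarith)
    linarith [hT0 ▸ this]
  have hPup : ∀ t, 0 ≤ t → ¬ P t → ∀ R ∈ Set.Ioo A' B, T R < t := by
    intro t ht hnt R hR
    by_contra hc'
    push_neg at hc'
    rcases le_or_gt A₀ R with h | h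
    · exact hnt (hIVT A₀ hA₀ R hR h t ⟨(hTA₀.trans_le ht).le, hc'⟩)
    · have := hTmono (Set.Ioo_subset_Ico_self hR) (Set.Ioo_subset_Ico_self hA₀) h
      linarith
  have hconst : ∀ t, 0 ≤ t → ¬ P t → ∀ y, t ≤ y → ρ y = B := by
    intro t ht hnt y hy
    by_cases hPy : P y
    · exfalso
      have h3 := hPup t ht hnt (ρ y) (hρP hPy).1
      rw [(hρP hPy).2] at h3
      linarith
    · exact hρB hPy
  have hmem : ∀ t ∈ Set.Ici (0:ℝ), ρ t ∈ Set.Icc A B := by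
    intro t ht
    by_cases h : P t
    · obtain ⟨hR, hTR⟩ := hρP h
      refine ⟨?_, hR.2.le⟩
      by_contra hlt
      push_neg at hlt
      have := hTmono (Set.Ioo_subset_Ico_self hR) (Set.Ioo_subset_Ico_self memA) hlt
      rw [hTR, hT0] at this
      exact absurd this (not_lt.2 ht)
    · rw [hρB h]; exact ⟨h2.le, le_refl B⟩
  -- eventual inverse property near a point where P holds
  have hPnhds : ∀ t, P t → ∀ᶠ y in 𝓝 t, T (ρ y) = y := by
    intro t ht
    obtain ⟨hmemt, hTt⟩ := hρP ht
    set R₁ : ℝ := (A' + ρ t) / 2 with hR₁def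
    set R₂ : ℝ := (ρ t + B) / 2 with hR₂def
    have hR₁ : R₁ ∈ Set.Ioo A' B := ⟨by simp only [hR₁def]; linarith [hmemt.1, hmemt.2],
      by simp only [hR₁def]; linarith [hmemt.1, hmemt.2]⟩
    have hR₂ : R₂ ∈ Set.Ioo A' B := ⟨by simp only [hR₂def]; linarith [hmemt.1, hmemt.2],
      by simp only [hR₂def]; linarith [hmemt.1, hmemt.2]⟩
    have h12 : R₁ ≤ R₂ := by simp only [hR₁def, hR₂def]; linarith [hmemt.1, hmemt.2]
    have hlt1 : T R₁ < t := by
      have := hTmono (Set.Ioo_subset_Ico_self hR₁) (Set.Ioo_subset_Ico_self hmemt)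
        (by simp only [hR₁def]; linarith [hmemt.1])
      linarith [hTt ▸ this]
    have hlt2 : t < T R₂ := by
      have := hTmono (Set.Ioo_subset_Ico_self hmemt) (Set.Ioo_subset_Ico_self hR₂)
        (by simp only [hR₂def]; linarith [hmemt.2])
      linarith [hTt ▸ this]
    filter_upwards [Ioo_mem_nhds hlt1 hlt2] with y hy
    exact (hρP (hIVT R₁ hR₁ R₂ hR₂ h12 y ⟨hy.1.le, hy.2.le⟩)).2
  have hcont : ∀ t, P t → ContinuousAt ρ t := by
    intro t ht
    obtain ⟨hmemt, hTt⟩ := hρP ht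
    rw [Metric.continuousAt_iff]
    intro ε hε
    set R₁ : ℝ := max (ρ t - ε / 2) ((A' + ρ t) / 2) with hR₁def
    set R₂ : ℝ := min (ρ t + ε / 2) ((ρ t + B) / 2) with hR₂def
    have hR₁lt : R₁ < ρ t := by
      apply max_lt <;> [linarith; linarith [hmemt.1]]
    have hR₁gt : A' < R₁ := lt_of_lt_of_le (by linarith [hmemt.1]) (le_max_right _ _)
    have hR₂gt : ρ t < R₂ := by
      apply lt_min <;> [linarith; linarith [hmemt.2]]
    have hR₂lt : R₂ < B := lt_of_le_of_lt (min_le_right _ _) (by linarith [hmemt.2])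
    have hR₁m : R₁ ∈ Set.Ioo A' B := ⟨hR₁gt, hR₁lt.trans hmemt.2⟩
    have hR₂m : R₂ ∈ Set.Ioo A' B := ⟨hmemt.1.trans hR₂gt, hR₂lt⟩
    have hlt1 : T R₁ < t := by
      have := hTmono (Set.Ioo_subset_Ico_self hR₁m) (Set.Ioo_subset_Ico_self hmemt) hR₁lt
      linarith [hTt ▸ this]
    have hlt2 : t < T R₂ := by
      have := hTmono (Set.Ioo_subset_Ico_self hmemt) (Set.Ioo_subset_Ico_self hR₂m) hR₂gt
      linarith [hTt ▸ this]
    refine ⟨min (t - T R₁) (T R₂ - t), lt_min (by linarith) (by linarith), ?_⟩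
    intro y hy
    rw [Real.dist_eq, abs_lt] at hy
    have hy1 : T R₁ < y := by have := hy.1; have h5 := min_le_left (t - T R₁) (T R₂ - t); linarith
    have hy2 : y < T R₂ := by have := hy.2; have h5 := min_le_right (t - T R₁) (T R₂ - t); linarith
    have hPy : P y := hIVT R₁ hR₁m R₂ hR₂m (hR₁lt.trans hR₂gt).le y ⟨hy1.le, hy2.le⟩
    obtain ⟨hmy, hTy⟩ := hρP hPy
    have hgt : R₁ < ρ y := by
      have := (hTmono.lt_iff_lt (Set.Ioo_subset_Ico_self hR₁m) (Set.Ioo_subset_Ico_self hmy)).1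
        (by rw [hTy]; exact hy1)
      exact this
    have hltt : ρ y < R₂ := by
      exact (hTmono.lt_iff_lt (Set.Ioo_subset_Ico_self hmy) (Set.Ioo_subset_Ico_self hR₂m)).1
        (by rw [hTy]; exact hy2)
    rw [Real.dist_eq, abs_lt]
    constructor
    · have := le_max_left (ρ t - ε / 2) ((A' + ρ t) / 2); simp only [hR₁def] at hgt; linarith [le_max_left (ρ t - ε / 2) ((A' + ρ t) / 2)]
    · have := min_le_left (ρ t + ε / 2) ((ρ t + B) / 2); simp only [hR₂def] at hltt; linarith
  have hderivP : ∀ t, P t → HasDerivAt ρ (F (ρ t)) t := by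
    intro t ht
    obtain ⟨hmemt, hTt⟩ := hρP ht
    have h5 : HasDerivAt ρ ((F (ρ t))⁻¹)⁻¹ t :=
      HasDerivAt.of_local_left_inverse (hcont t ht) (hTd (ρ t) hmemt)
        (inv_ne_zero (hFpos (ρ t) (Set.Ioo_subset_Ico_self hmemt)).ne') (hPnhds t ht)
    rwa [inv_inv] at h5
  have hTltB : ∀ x ∈ Set.Ioo A' B, ∀ R ∈ Set.Icc x B, x ≤ R → A' < R := fun x hx R hR _ => hx.1.trans_le hR.1
  -- derivative at points where P fails
  have hderivN : ∀ t, 0 ≤ t → ¬ P t → (∀ y, 0 ≤ y → y < t → P y) → HasDerivAt ρ (F (ρ t)) t := by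
    intro t ht hnt hall
    have htpos : 0 < t := by
      rcases ht.lt_or_eq with h | h
      · exact h
      · exact absurd ⟨A, memA, h ▸ hT0⟩ hnt
    have hρt : ρ t = B := hρB hnt
    rw [hasDerivAt_iff_tendsto_slope, hρt, hFB]
    rw [Metric.tendsto_nhds]
    intro ε hε
    -- continuity of F at B
    have hFB' : ∃ δ > 0, ∀ x ∈ Set.Icc A' B, |x - B| < δ → F x < ε / 2 := by
      have hcw : ContinuousWithinAt F (Set.Icc A' B) B := hFc B ⟨(h0.trans (h1.trans h2)).le.trans (le_refl B) |>.trans (le_refl B) |> fun _ => (h1.trans h2).le, le_refl B⟩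
      rw [Metric.continuousWithinAt_iff] at hcw
      obtain ⟨δ, hδ, hδ'⟩ := hcw (ε / 2) (by linarith)
      refine ⟨δ, hδ, fun x hx hxd => ?_⟩
      have := hδ' hx (by rw [Real.dist_eq]; exact hxd)
      rw [Real.dist_eq, hFB, sub_zero] at this
      exact lt_of_le_of_lt (le_abs_self _) this
    obtain ⟨δ, hδpos, hδ⟩ := hFB'
    set R₃ : ℝ := max (B - δ / 2) A₀ with hR₃def
    have hR₃m : R₃ ∈ Set.Ioo A' B := ⟨lt_of_lt_of_le hA₀.1 (le_max_right _ _),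
      max_lt (by linarith) hA₀.2⟩
    have hR₃ge : B - δ / 2 ≤ R₃ := le_max_left _ _
    have hTR₃ : T R₃ < t := hPup t ht hnt R₃ hR₃m
    set N : ℝ := max (T R₃) 0 with hNdef
    have hNt : N < t := max_lt hTR₃ htpos
    have hkey : ∀ y, N < y → y < t → B - ρ y ≤ ε / 2 * (t - y) := by
      intro y hNy hyt
      have hy0 : 0 ≤ y := le_of_lt (lt_of_le_of_lt (le_max_right (T R₃) 0) hNy)
      have hPy : P y := hall y hy0 hyt
      obtain ⟨hmy, hTy⟩ := hρP hPy
      have hρgt : R₃ < ρ y := by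
        refine (hTmono.lt_iff_lt (Set.Ioo_subset_Ico_self hR₃m) (Set.Ioo_subset_Ico_self hmy)).1 ?_
        rw [hTy]
        exact lt_of_le_of_lt (le_max_left (T R₃) 0) hNy
      have hub : ∀ R ∈ Set.Ioo (ρ y) B, R - ρ y ≤ ε / 2 * (t - y) := by
        intro R hR
        have hRm : R ∈ Set.Ioo A' B := ⟨hmy.1.trans hR.1, hR.2⟩
        have hTR : T R < t := hPup t ht hnt R hRm
        have hsub : T R - T (ρ y) = ∫ s in (ρ y)..R, (F s)⁻¹ :=
          intervalIntegral.integral_interval_sub_left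
            (hInt A (Set.Ioo_subset_Ico_self memA) R (Set.Ioo_subset_Ico_self hRm))
            (hInt A (Set.Ioo_subset_Ico_self memA) (ρ y) (Set.Ioo_subset_Ico_self hmy))
        have hfl : ∀ s ∈ Set.Icc (ρ y) R, (ε / 2)⁻¹ ≤ (F s)⁻¹ := by
          intro s hs
          have hsm : s ∈ Set.Ico A' B := ⟨hmy.1.le.trans hs.1, lt_of_le_of_lt hs.2 hR.2⟩
          have hFs : 0 < F s := hFpos s hsm
          have hsB : |s - B| < δ := by
            rw [abs_lt]
            constructor
            · linarith [hρgt, hs.1, hR₃ge]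
            · linarith [hsm.2]
          have hFse : F s < ε / 2 := hδ s ⟨hsm.1, hsm.2.le⟩ hsB
          exact (inv_anti₀ hFs hFse.le)
        have hintle : (R - ρ y) * (ε / 2)⁻¹ ≤ ∫ s in (ρ y)..R, (F s)⁻¹ := by
          have hmono2 := intervalIntegral.integral_mono_on hR.1.le
            (_root_.intervalIntegrable_const (c := (ε / 2)⁻¹))
            (hInt (ρ y) (Set.Ioo_subset_Ico_self hmy) R (Set.Ioo_subset_Ico_self hRm)) hfl
          rwa [intervalIntegral.integral_const, smul_eq_mul] at hmono2
        have h6 : (R - ρ y) * (ε / 2)⁻¹ ≤ t - y := by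
          have h7 := hintle
          rw [← hsub, hTy] at h7
          linarith
        calc R - ρ y = (R - ρ y) * (ε / 2)⁻¹ * (ε / 2) := by field_simp
          _ ≤ (t - y) * (ε / 2) := by
              apply mul_le_mul_of_nonneg_right h6 (by linarith)
          _ = ε / 2 * (t - y) := by ring
      by_contra hcon
      push_neg at hcon
      set R := ρ y + (ε / 2 * (t - y) + (B - ρ y)) / 2 with hRdef
      have hR : R ∈ Set.Ioo (ρ y) B := by
        constructor
        · simp only [hRdef]; nlinarith [hε.le, sub_nonneg.2 hyt.le]
        · simp only [hRdef]; nlinarith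
      have := hub R hR
      simp only [hRdef] at this
      nlinarith
    have hmemnhds : Set.Ioo N (t + 1) ∈ 𝓝[≠] t :=
      nhdsWithin_le_nhds (Ioo_mem_nhds hNt (by linarith))
    filter_upwards [hmemnhds, self_mem_nhdsWithin] with y hy hy'
    rcases lt_or_gt_of_ne (hy' : y ≠ t) with hlt | hgt
    · have hk := hkey y hy.1 hlt
      have hρy : ρ y ≤ B := by
        by_cases hPy : P y
        · exact (hρP hPy).1.2.le
        · rw [hρB hPy]
      rw [slope_def_field, hρt, dist_zero_right, Real.norm_eq_abs]
      rw [abs_div, abs_of_nonpos (by linarith : ρ y - B ≤ 0), abs_of_nonpos (by linarith : y - t ≤ 0)]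
      rw [div_lt_iff₀ (by linarith : 0 < -(y - t))]
      nlinarith
    · have hρy : ρ y = B := hconst t ht hnt y hgt.le
      rw [slope_def_field, hρt, hρy, sub_self, zero_div, dist_self]
      exact hε
  have hderiv : ∀ t ∈ Set.Ici (0:ℝ), HasDerivAt ρ (F (ρ t)) t := by
    intro t ht
    by_cases h : P t
    · exact hderivP t h
    · by_cases hall : ∀ y, 0 ≤ y → y < t → P y
      · exact hderivN t ht h hall
      · push_neg at hall
        obtain ⟨t', ht'0, ht't, hnt'⟩ := hall
        have hev : ∀ᶠ y in 𝓝 t, ρ y = B := by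
          filter_upwards [Ioi_mem_nhds ht't] with y hy
          exact hconst t' ht'0 hnt' y hy.le
        have hconst2 : HasDerivAt ρ 0 t :=
          (hasDerivAt_const t B).congr_of_eventuallyEq hev
        have : ρ t = B := hρB h
        rw [this, hFB]
        exact hconst2
  have hmono : MonotoneOn ρ (Set.Ici 0) := by
    intro s hs t ht hst
    by_cases hPs : P s
    · by_cases hPt : P t
      · exact (hTmono.le_iff_le (Set.Ioo_subset_Ico_self (hρP hPs).1)
          (Set.Ioo_subset_Ico_self (hρP hPt).1)).1 (by rw [(hρP hPs).2, (hρP hPt).2]; exact hst)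
      · rw [hρB hPt]; exact (hρP hPs).1.2.le
    · rw [hρB hPs, hconst s hs hPs t hst]
  have htend : Filter.Tendsto ρ Filter.atTop (nhds B) := by
    rw [Metric.tendsto_atTop]
    intro ε hε
    by_cases hall : ∀ t, 0 ≤ t → P t
    · set R₄ : ℝ := max (B - ε / 2) A₀ with hR₄def
      have hR₄m : R₄ ∈ Set.Ioo A' B := ⟨lt_of_lt_of_le hA₀.1 (le_max_right _ _),
        max_lt (by linarith) hA₀.2⟩
      refine ⟨max (T R₄ + 1) 0, fun t htN => ?_⟩
      have ht0 : 0 ≤ t := le_trans (le_max_right _ _) htN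
      have hPt : P t := hall t ht0
      obtain ⟨hmt, hTt⟩ := hρP hPt
      have hgt : R₄ < ρ t := by
        refine (hTmono.lt_iff_lt (Set.Ioo_subset_Ico_self hR₄m) (Set.Ioo_subset_Ico_self hmt)).1 ?_
        rw [hTt]
        have := le_trans (le_max_left (T R₄ + 1) 0) htN
        linarith
      rw [Real.dist_eq, abs_lt]
      constructor
      · have := le_max_left (B - ε / 2) A₀; linarith
      · linarith [hmt.2]
    · push_neg at hall
      obtain ⟨t₀, ht₀, hnt₀⟩ := hall
      refine ⟨t₀, fun t htN => ?_⟩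
      rw [hconst t₀ ht₀ hnt₀ t htN, dist_self]
      exact hε
  exact ⟨ρ, hρ0, hmem, hderiv, hmono, htend⟩
open Set Filter Topology Real

lemma stmt12_exp (ρ d : ℝ → ℝ) (k : ℝ)
    (hd : ∀ t ∈ Set.Ici (0:ℝ), HasDerivAt ρ (d t) t)
    (hge : ∀ t ∈ Set.Ici (0:ℝ), 0 ≤ d t + k * ρ t) :
    ∀ t ∈ Set.Ici (0:ℝ), ρ 0 * Real.exp (-(k * t)) ≤ ρ t := by
  set u : ℝ → ℝ := fun t => ρ t * Real.exp (k * t) with hudef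
  have hu : ∀ t ∈ Set.Ici (0:ℝ), HasDerivAt u ((d t + k * ρ t) * Real.exp (k * t)) t := by
    intro t ht
    have h1 : HasDerivAt (fun y : ℝ => Real.exp (k * y)) (Real.exp (k * t) * (k * 1)) t :=
      ((hasDerivAt_id t).const_mul k).exp
    have h2 : HasDerivAt (fun y => ρ y * Real.exp (k * y))
        (d t * Real.exp (k * t) + ρ t * (Real.exp (k * t) * (k * 1))) t := (hd t ht).mul h1
    convert h2 using 1
    ring
  have humono : MonotoneOn u (Set.Ici 0) := by
    apply monotoneOn_of_deriv_nonneg (convex_Ici 0)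
    · intro t ht
      exact (hu t ht).continuousAt.continuousWithinAt
    · intro t ht
      rw [interior_Ici] at ht
      exact ((hu t (mem_Ici.2 (le_of_lt ht))).differentiableAt).differentiableWithinAt
    · intro t ht
      rw [interior_Ici] at ht
      rw [(hu t (mem_Ici.2 (le_of_lt ht))).deriv]
      exact mul_nonneg (hge t (mem_Ici.2 (le_of_lt ht))) (Real.exp_pos _).le
  intro t ht
  have h2 : u 0 ≤ u t := humono self_mem_Ici ht ht
  have h3 : u 0 = ρ 0 := by simp [hudef]
  have h4 : (0:ℝ) < Real.exp (k * t) := Real.exp_pos _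
  rw [h3] at h2
  rw [Real.exp_neg]
  have h6 := mul_le_mul_of_nonneg_right h2 (inv_nonneg.2 h4.le)
  rw [hudef] at h6
  simp only at h6
  rwa [mul_assoc, mul_inv_cancel₀ h4.ne', mul_one] at h6

lemma stmt12_bounds (G : ℝ → ℝ) (a ν R₀ : ℝ) (ρ : ℝ → ℝ)
    (hρ0 : ρ 0 = R₀)
    (hpos : ∀ t ∈ Set.Ici (0:ℝ), 0 < ρ t)
    (hd : ∀ t ∈ Set.Ici (0:ℝ), HasDerivAt ρ (ρ t * G (ρ t)) t)
    (hbd : ∀ R ∈ Set.Ioi (0:ℝ), -ν / 3 ≤ G R ∧ G R ≤ a / 3) :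
    ∀ t ∈ Set.Ici (0:ℝ),
      R₀ * Real.exp (-ν * t / 3) ≤ ρ t ∧ ρ t ≤ R₀ * Real.exp (a * t / 3) := by
  have hlow := stmt12_exp ρ (fun t => ρ t * G (ρ t)) (ν / 3) hd (fun t ht => by
    have h1 := (hbd (ρ t) (hpos t ht)).1
    have h2 := hpos t ht
    nlinarith)
  have hup := stmt12_exp (fun t => -ρ t) (fun t => -(ρ t * G (ρ t))) (-(a / 3))
    (fun t ht => (hd t ht).neg)
    (fun t ht => by
      have h1 := (hbd (ρ t) (hpos t ht)).2
      have h2 := hpos t ht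
      nlinarith)
  intro t ht
  constructor
  · have h5 := hlow t ht
    rw [hρ0, show -(ν / 3 * t) = -ν * t / 3 by ring] at h5
    exact h5
  · have h5 := hup t ht
    rw [hρ0, show -(-(a / 3) * t) = a * t / 3 by ring] at h5
    linarith

/-- global asymptotic stability of the dormant radius R_s. -/
theorem stmt12
    (G : ℝ → ℝ) (a ν R_s R₀ : ℝ) (hν : 0 < ν) (ha : 0 < a)
    (hR₀ : 0 < R₀) (hRs : 0 < R_s)
    (hc : ContinuousOn G (Set.Ioi 0))
    (hanti : StrictAntiOn G (Set.Ioi 0))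
    (hzero : G R_s = 0)
    (hbd : ∀ R ∈ Set.Ioi (0:ℝ), -ν / 3 ≤ G R ∧ G R ≤ a / 3) :
    ∃ ρ : ℝ → ℝ, ρ 0 = R₀ ∧
      (∀ t ∈ Set.Ici (0:ℝ), 0 < ρ t) ∧
      (∀ t ∈ Set.Ici (0:ℝ), HasDerivAt ρ (ρ t * G (ρ t)) t) ∧
      (∀ t ∈ Set.Ici (0:ℝ),
        R₀ * Real.exp (-ν * t / 3) ≤ ρ t ∧ ρ t ≤ R₀ * Real.exp (a * t / 3)) ∧
      (R₀ ≤ R_s → MonotoneOn ρ (Set.Ici 0)) ∧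
      (R_s ≤ R₀ → AntitoneOn ρ (Set.Ici 0)) ∧
      Filter.Tendsto ρ Filter.atTop (nhds R_s) := by
  rcases lt_trichotomy R₀ R_s with h | h | h
  · -- increasing case
    have hsub1 : Set.Icc (R₀ / 2) R_s ⊆ Set.Ioi 0 := fun x hx => lt_of_lt_of_le (by linarith) hx.1
    obtain ⟨ρ, hρ0, hmem, hd, hmono, htend⟩ := stmt12_key (fun R => R * G R) (R₀ / 2) R₀ R_s
      (by linarith) (by linarith) h
      (ContinuousOn.mul continuousOn_id (hc.mono hsub1))
      (fun R hR => by
        have hR0 : (0:ℝ) < R := lt_of_lt_of_le (by linarith) hR.1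
        have hG : G R_s < G R := hanti (Set.mem_Ioi.2 hR0) (Set.mem_Ioi.2 hRs) hR.2
        rw [hzero] at hG
        exact mul_pos hR0 hG)
      (show R_s * G R_s = 0 by rw [hzero, mul_zero])
    have hpos : ∀ t ∈ Set.Ici (0:ℝ), 0 < ρ t := fun t ht => lt_of_lt_of_le hR₀ (hmem t ht).1
    have hd' : ∀ t ∈ Set.Ici (0:ℝ), HasDerivAt ρ (ρ t * G (ρ t)) t := fun t ht => hd t ht
    exact ⟨ρ, hρ0, hpos, hd', stmt12_bounds G a ν R₀ ρ hρ0 hpos hd' hbd,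
      fun _ => hmono, fun hle => absurd h (not_lt.2 hle), htend⟩
  · -- steady state
    subst h
    refine ⟨fun _ => R₀, rfl, fun t _ => hR₀, ?_, ?_, fun _ => monotoneOn_const,
      fun _ => antitoneOn_const, tendsto_const_nhds⟩
    · intro t _
      rw [hzero, mul_zero]
      exact hasDerivAt_const t R₀
    · intro t ht
      constructor
      · have h1 : Real.exp (-ν * t / 3) ≤ 1 := by
          rw [← Real.exp_zero]
          apply Real.exp_le_exp.2
          have : (0:ℝ) ≤ t := ht
          nlinarith
        nlinarith [Real.exp_pos (-ν * t / 3)]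
      · have h1 : (1:ℝ) ≤ Real.exp (a * t / 3) := by
          rw [← Real.exp_zero]
          apply Real.exp_le_exp.2
          have : (0:ℝ) ≤ t := ht
          positivity
        nlinarith
  · -- decreasing case
    have hsub2 : ∀ x ∈ Set.Icc (R_s / 2) R₀, R_s + R₀ - x ∈ Set.Ioi 0 := by
      intro x hx
      have := hx.2
      simp only [Set.mem_Ioi]
      linarith
    obtain ⟨σ, hσ0, hmem, hdσ, hmonoσ, htendσ⟩ := stmt12_key
      (fun x => -((R_s + R₀ - x) * G (R_s + R₀ - x))) (R_s / 2) R_s R₀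
      (by linarith) (by linarith) h
      (by
        have h1 : ContinuousOn (fun x : ℝ => R_s + R₀ - x) (Set.Icc (R_s / 2) R₀) :=
          continuousOn_const.sub continuousOn_id
        exact (h1.mul (hc.comp h1 hsub2)).neg)
      (fun x hx => by
        have hx2 : x < R₀ := hx.2
        have hcx : R_s < R_s + R₀ - x := by linarith
        have hcx0 : (0:ℝ) < R_s + R₀ - x := by linarith
        have hG : G (R_s + R₀ - x) < G R_s := hanti (Set.mem_Ioi.2 hRs) (Set.mem_Ioi.2 hcx0) hcx
        rw [hzero] at hG
        have := mul_pos hcx0 (neg_pos.2 hG)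
        show (0:ℝ) < -((R_s + R₀ - x) * G (R_s + R₀ - x))
        nlinarith)
      (show -((R_s + R₀ - R₀) * G (R_s + R₀ - R₀)) = 0 by
        rw [show R_s + R₀ - R₀ = R_s by ring, hzero, mul_zero, neg_zero])
    set ρ : ℝ → ℝ := fun t => R_s + R₀ - σ t with hρdef
    have hρ0 : ρ 0 = R₀ := by rw [hρdef]; simp only; rw [hσ0]; ring
    have hpos : ∀ t ∈ Set.Ici (0:ℝ), 0 < ρ t := by
      intro t ht
      have := (hmem t ht).2
      simp only [hρdef]
      linarith
    have hd' : ∀ t ∈ Set.Ici (0:ℝ), HasDerivAt ρ (ρ t * G (ρ t)) t := by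
      intro t ht
      have h1 := (hdσ t ht).const_sub (R_s + R₀)
      simp only [neg_neg] at h1
      exact h1
    refine ⟨ρ, hρ0, hpos, hd', stmt12_bounds G a ν R₀ ρ hρ0 hpos hd' hbd,
      fun hle => absurd h (not_lt.2 hle), fun _ => ?_, ?_⟩
    · intro s hs t ht hst
      simp only [hρdef]
      exact sub_le_sub_left (hmonoσ hs ht hst) _
    · have h1 : Filter.Tendsto (fun t => R_s + R₀ - σ t) Filter.atTop (nhds (R_s + R₀ - R₀)) :=
        Filter.Tendsto.const_sub _ htendσ
      rw [show R_s + R₀ - R₀ = R_s by ring] at h1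
      exact h1
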